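/- For every j < κ and every A ∈ D whose minimum is greater than j, the set S_A is disjoint from A_j. Consequently A_j does not belong to the ultrafilter E generated by the sets S_A for A ∈ D. -/

import Mathlib

open Set

/-- A normal ultrafilter on the set of ordinals below `κ.ord`. -/
structure NormalUltrafilterOn (κ : Cardinal.{0}) where
  sets : Set (Set Ordinal)
  mem_subset : ∀ A ∈ sets, A ⊆ Set.Iio κ.ord
  univ_mem : Set.Iio κ.ord ∈ sets
  empty_not_mem : ∅ ∉ sets
  superset_mem : ∀ A B : Set Ordinal, A ∈ sets → A ⊆ B → B ⊆ Set.Iio κ.ord → B ∈ sets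
  ultra : ∀ A : Set Ordinal, A ⊆ Set.Iio κ.ord → A ∈ sets ∨ (Set.Iio κ.ord \ A) ∈ sets
  complete : ∀ S : Set (Set Ordinal), S ⊆ sets → S.Nonempty →
    Cardinal.mk S < Cardinal.lift.{1} κ → ⋂₀ S ∈ sets
  nonprincipal : ∀ α : Ordinal, (Set.Iio κ.ord \ {α}) ∈ sets
  normal : ∀ f : Ordinal → Ordinal, ∀ A ∈ sets, (∀ α ∈ A, f α < α) →
    ∃ B ∈ sets, ∃ γ : Ordinal, ∀ α ∈ B, f α = γ

/-- `Fseq A i α` is `F(i,α)`: the `α`-th element, in increasing order, of the set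
`A i \ ⋃ j < i, A j`. -/
noncomputable def Fseq (A : Ordinal → Set Ordinal) (i α : Ordinal) : Ordinal :=
  Ordinal.enumOrd (A i \ ⋃ j < i, A j) α

/-- `Sset A C` is `S_C = {F(i,α) : i < α and i, α ∈ C}`. -/
def Sset (A : Ordinal → Set Ordinal) (C : Set Ordinal) : Set Ordinal :=
  {β | ∃ i α, i ∈ C ∧ α ∈ C ∧ i < α ∧ Fseq A i α = β}

/-- `Eset κ D A` is `E = {Y ⊆ κ : there exists C ∈ D such that S_C ⊆ Y}`. -/
def Eset (κ : Cardinal.{0}) (D : NormalUltrafilterOn κ) (A : Ordinal → Set Ordinal) :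
    Set (Set Ordinal) :=
  {Y | Y ⊆ Set.Iio κ.ord ∧ ∃ C ∈ D.sets, Sset A C ⊆ Y}


open Set Cardinal Ordinal

namespace Stmt10Aux

variable {κ : Cardinal.{0}}

lemma inter_mem (hκ : Cardinal.aleph0 < κ) (D : NormalUltrafilterOn κ)
    {X Y : Set Ordinal} (hX : X ∈ D.sets) (hY : Y ∈ D.sets) : X ∩ Y ∈ D.sets := by
  have h := D.complete {X, Y} ?_ ⟨X, by simp⟩ ?_
  · rwa [sInter_pair] at h
  · rintro Z (rfl | rfl) <;> assumption
  · refine lt_of_lt_of_le ((Set.finite_singleton Y).insert X).lt_aleph0 ?_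
    rw [← Cardinal.lift_aleph0.{1, 0}]
    exact Cardinal.lift_le.2 hκ.le

lemma mem_nonempty (D : NormalUltrafilterOn κ) {X : Set Ordinal} (hX : X ∈ D.sets) :
    X.Nonempty := by
  rcases X.eq_empty_or_nonempty with rfl | h
  · exact absurd hX D.empty_not_mem
  · exact h

lemma tail_mem (hκ : Cardinal.aleph0 < κ) (D : NormalUltrafilterOn κ)
    {β : Ordinal} (hβ : β < κ.ord) : Set.Iio κ.ord \ Set.Iic β ∈ D.sets := by
  have h := D.complete ((fun γ => Set.Iio κ.ord \ {γ}) '' Set.Iic β) ?_ ⟨_, β, mem_Iic.2 le_rfl, rfl⟩ ?_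
  · have he : ⋂₀ ((fun γ => Set.Iio κ.ord \ {γ}) '' Set.Iic β) = Set.Iio κ.ord \ Set.Iic β := by
      ext γ
      constructor
      · intro h'
        refine ⟨(h' _ ⟨β, mem_Iic.2 le_rfl, rfl⟩).1, fun hc => ?_⟩
        exact (h' _ ⟨γ, hc, rfl⟩).2 rfl
      · rintro ⟨h1, h2⟩ Z ⟨δ, hδ, rfl⟩
        exact ⟨h1, fun he => h2 (by rw [mem_singleton_iff] at he; exact he ▸ hδ)⟩
    rwa [he] at h
  · rintro Z ⟨γ, _, rfl⟩
    exact D.nonprincipal γ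
  · calc #((fun γ => Set.Iio κ.ord \ {γ}) '' Set.Iic β) ≤ #(Set.Iic β) := mk_image_le
      _ ≤ #(Set.Iio (Order.succ β)) := mk_le_mk_of_subset (fun x hx => mem_Iio.2 (Order.lt_succ_iff.2 hx))
      _ = Cardinal.lift.{1} (Order.succ β).card := Ordinal.mk_Iio_ordinal _
      _ < Cardinal.lift.{1} κ :=
        Cardinal.lift_lt.2 (Cardinal.lt_ord.1 ((isSuccLimit_ord hκ.le).succ_lt hβ))

lemma regular (hκ : Cardinal.aleph0 < κ) (D : NormalUltrafilterOn κ) : κ.IsRegular := by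
  refine ⟨hκ.le, le_of_not_gt fun h => ?_⟩
  obtain ⟨ι, f, hlsub, hcard⟩ := Ordinal.exists_lsub_cof κ.ord
  have hne : Nonempty ι := by
    by_contra h'
    rw [not_nonempty_iff] at h'
    have h0 : Ordinal.lsub f ≤ 0 := Ordinal.lsub_le fun i => (h'.false i).elim
    rw [hlsub] at h0
    exact absurd ((isSuccLimit_ord hκ.le).pos.trans_le h0) (lt_irrefl 0)
  have h4 := D.complete (Set.range (fun i => Set.Iio κ.ord \ Set.Iic (f i))) ?_
    (Set.range_nonempty _) ?_
  · have he : ⋂₀ (Set.range (fun i => Set.Iio κ.ord \ Set.Iic (f i))) = ∅ := by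
      ext γ
      simp only [mem_sInter, mem_empty_iff_false, iff_false]
      intro h'
      have hγ : γ < κ.ord := (h' _ ⟨Classical.arbitrary ι, rfl⟩).1
      have hle : κ.ord ≤ γ := by
        rw [← hlsub]
        exact Ordinal.lsub_le fun i => not_le.1 fun hle => (h' _ ⟨i, rfl⟩).2 hle
      exact absurd hγ (not_lt.2 hle)
    rw [he] at h4
    exact D.empty_not_mem h4
  · rintro Z ⟨i, rfl⟩
    exact tail_mem hκ D (hlsub ▸ Ordinal.lt_lsub f i)
  · have hr := mk_range_le_lift (f := fun i => Set.Iio κ.ord \ Set.Iic (f i))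
    simp only [Cardinal.lift_id'] at hr
    refine lt_of_le_of_lt hr ?_
    rw [hcard]
    exact Cardinal.lift_lt.2 h

lemma regular_lift (hκ : Cardinal.aleph0 < κ) (D : NormalUltrafilterOn κ) :
    (Cardinal.lift.{1} κ).IsRegular := by
  have hreg := regular hκ D
  constructor
  · rw [← Cardinal.lift_aleph0.{1, 0}]
    exact Cardinal.lift_le.2 hreg.1
  · have he : (Cardinal.lift.{1} κ).ord.cof = Cardinal.lift.{1} (κ.ord.cof) := by
      rw [← Cardinal.lift_ord, ← Ordinal.lift_cof]
    rw [he]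
    exact Cardinal.lift_le.2 hreg.2

lemma enum_mem (hκ : Cardinal.aleph0 < κ) (hreg : (Cardinal.lift.{1} κ).IsRegular)
    {s : Set Ordinal} (hs : s ⊆ Set.Iio κ.ord) (hcard : Cardinal.lift.{1} κ ≤ #s) :
    ∀ α < κ.ord, Ordinal.enumOrd s α ∈ s := by
  intro α
  induction α using Ordinal.induction with
  | h α IH =>
  intro hα
  have hT : (s ∩ {b | ∀ c, c < α → Ordinal.enumOrd s c < b}).Nonempty := by
    by_contra hT
    rw [Set.not_nonempty_iff_eq_empty] at hT
    have hsub : s ⊆ ⋃ c ∈ Set.Iio α, Set.Iic (Ordinal.enumOrd s c) := by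
      intro b hb
      by_contra hb'
      simp only [mem_iUnion, mem_Iic, not_exists] at hb'
      have hmem : b ∈ s ∩ {b | ∀ c, c < α → Ordinal.enumOrd s c < b} :=
        ⟨hb, fun c hc => not_le.1 (hb' c hc)⟩
      rw [hT] at hmem
      exact hmem
    have hlt : #(⋃ c ∈ Set.Iio α, Set.Iic (Ordinal.enumOrd s c)) < Cardinal.lift.{1} κ := by
      refine lt_of_le_of_lt (Cardinal.mk_biUnion_le _ _) ?_
      have hI : #(Set.Iio α) < Cardinal.lift.{1} κ := by
        rw [Ordinal.mk_Iio_ordinal]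
        exact Cardinal.lift_lt.2 (Cardinal.lt_ord.1 hα)
      refine Cardinal.mul_lt_of_lt hreg.1 hI (Cardinal.iSup_lt_of_isRegular hreg hI ?_)
      rintro ⟨c, hc⟩
      have hmem : Ordinal.enumOrd s c ∈ s := IH c hc (hc.trans hα)
      have hlt' : Ordinal.enumOrd s c < κ.ord := hs hmem
      calc #(Set.Iic (Ordinal.enumOrd s c))
          ≤ #(Set.Iio (Order.succ (Ordinal.enumOrd s c))) :=
            mk_le_mk_of_subset (fun x hx => mem_Iio.2 (Order.lt_succ_iff.2 hx))
        _ = Cardinal.lift.{1} (Order.succ (Ordinal.enumOrd s c)).card := Ordinal.mk_Iio_ordinal _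
        _ < Cardinal.lift.{1} κ :=
            Cardinal.lift_lt.2 (Cardinal.lt_ord.1 ((isSuccLimit_ord hκ.le).succ_lt hlt'))
    exact absurd (hcard.trans (Cardinal.mk_le_mk_of_subset hsub)) (not_le.2 hlt)
  rw [Ordinal.enumOrd]
  exact (csInf_mem hT).1

lemma part1 (κ : Cardinal.{0}) (hκ : Cardinal.aleph0 < κ) (D : NormalUltrafilterOn κ)
    (Bfam : Set (Set Ordinal))
    (hBsub : ∀ C ∈ Bfam, C ⊆ Set.Iio κ.ord)
    (hBcard : ∀ C ∈ Bfam, Cardinal.mk C = Cardinal.lift.{1} κ)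
    (hBad : ∀ C ∈ Bfam, ∀ C' ∈ Bfam, C ≠ C' →
      Cardinal.mk ↥(C ∩ C') < Cardinal.lift.{1} κ)
    (A : Ordinal → Set Ordinal) (hA : ∀ i < κ.ord, A i ∈ Bfam)
    (hAinj : ∀ i < κ.ord, ∀ j < κ.ord, i ≠ j → A i ≠ A j)
    (j : Ordinal)
    (C : Set Ordinal) (hC : C ∈ D.sets) (hmin : j < sInf C) :
    Sset A C ∩ A j = ∅ := by
  have hregL := regular_lift hκ D
  rw [Set.eq_empty_iff_forall_notMem]
  rintro β ⟨⟨i, α, hi, hα, hiα, rfl⟩, hβA⟩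
  have hiκ : i < κ.ord := D.mem_subset C hC hi
  have hακ : α < κ.ord := D.mem_subset C hC hα
  have hji : j < i := lt_of_lt_of_le hmin (csInf_le' hi)
  have hUi : #(↥(A i ∩ ⋃ j' < i, A j')) < Cardinal.lift.{1} κ := by
    have he : A i ∩ ⋃ j' < i, A j' = ⋃ j' ∈ Set.Iio i, (A i ∩ A j') := by
      ext x
      simp only [mem_inter_iff, mem_iUnion, mem_Iio, exists_prop]
      tauto
    rw [he]
    refine lt_of_le_of_lt (Cardinal.mk_biUnion_le _ _) ?_
    have hI : #(Set.Iio i) < Cardinal.lift.{1} κ := by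
      rw [Ordinal.mk_Iio_ordinal]
      exact Cardinal.lift_lt.2 (Cardinal.lt_ord.1 hiκ)
    refine Cardinal.mul_lt_of_lt hregL.1 hI (Cardinal.iSup_lt_of_isRegular hregL hI ?_)
    rintro ⟨j', hj'⟩
    have hj'i : j' < i := hj'
    have hj'κ : j' < κ.ord := hj'i.trans hiκ
    exact hBad _ (hA i hiκ) _ (hA j' hj'κ) (hAinj i hiκ j' hj'κ (ne_of_gt hj'i))
  have hscard : Cardinal.lift.{1} κ ≤ #(↥(A i \ ⋃ j' < i, A j')) := by
    by_contra hlt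
    rw [not_le] at hlt
    have hdm := Cardinal.mk_diff_add_mk (S := A i) (T := A i ∩ ⋃ j' < i, A j')
      inter_subset_left
    rw [Set.diff_self_inter, hBcard _ (hA i hiκ)] at hdm
    have h2 := Cardinal.add_lt_of_lt hregL.1 hlt hUi
    rw [hdm] at h2
    exact lt_irrefl _ h2
  have hmem := enum_mem hκ hregL
    (fun x hx => hBsub _ (hA i hiκ) (diff_subset hx)) hscard α hακ
  exact hmem.2 (Set.mem_biUnion hji hβA)


end Stmt10Aux

open Stmt10Aux in
theorem stmt10 (κ : Cardinal.{0}) (hκ : Cardinal.aleph0 < κ) (D : NormalUltrafilterOn κ)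
    -- `Bfam` is a κ-almost disjoint family on κ:
    (Bfam : Set (Set Ordinal))
    (hBsub : ∀ C ∈ Bfam, C ⊆ Set.Iio κ.ord)
    (hBcard : ∀ C ∈ Bfam, Cardinal.mk C = Cardinal.lift.{1} κ)
    (hBad : ∀ C ∈ Bfam, ∀ C' ∈ Bfam, C ≠ C' →
      Cardinal.mk ↥(C ∩ C') < Cardinal.lift.{1} κ)
    -- `(A i : i < κ)` is a sequence of pairwise distinct members of `Bfam`:
    (A : Ordinal → Set Ordinal) (hA : ∀ i < κ.ord, A i ∈ Bfam)
    (hAinj : ∀ i < κ.ord, ∀ j < κ.ord, i ≠ j → A i ≠ A j)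
    (j : Ordinal) (hj : j < κ.ord)
    (C : Set Ordinal) (hC : C ∈ D.sets) (hmin : j < sInf C) :
    Sset A C ∩ A j = ∅ ∧ A j ∉ Eset κ D A := by
  
  refine ⟨part1 κ hκ D Bfam hBsub hBcard hBad A hA hAinj j C hC hmin, ?_⟩
  rintro ⟨hsub, C', hC', hS⟩
  have hC2 : C' ∩ (Set.Iio κ.ord \ Set.Iic j) ∈ D.sets :=
    inter_mem hκ D hC' (tail_mem hκ D hj)
  set C2 := C' ∩ (Set.Iio κ.ord \ Set.Iic j) with hC2def
  have hne2 : C2.Nonempty := mem_nonempty D hC2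
  have hi0 : sInf C2 ∈ C2 := csInf_mem hne2
  have hminC2 : j < sInf C2 := not_le.1 hi0.2.2
  have hdisj := part1 κ hκ D Bfam hBsub hBcard hBad A hA hAinj j C2 hC2 hminC2
  have hC3 : C2 ∩ (Set.Iio κ.ord \ {sInf C2}) ∈ D.sets :=
    inter_mem hκ D hC2 (D.nonprincipal (sInf C2))
  obtain ⟨α0, hα0⟩ := mem_nonempty D hC3
  have hα0C2 : α0 ∈ C2 := hα0.1
  have hi0α0 : sInf C2 < α0 :=
    lt_of_le_of_ne (csInf_le' hα0C2) (Ne.symm hα0.2.2)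
  have hmemS : Fseq A (sInf C2) α0 ∈ Sset A C2 := ⟨sInf C2, α0, hi0, hα0C2, hi0α0, rfl⟩
  have hmemS' : Fseq A (sInf C2) α0 ∈ Sset A C' := ⟨sInf C2, α0, hi0.1, hα0C2.1, hi0α0, rfl⟩
  have hboth : Fseq A (sInf C2) α0 ∈ Sset A C2 ∩ A j := ⟨hmemS, hS hmemS'⟩
  rw [hdisj] at hboth
  exact hboth
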